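/- (Proposition for regime R4a.) Let ν be a probability measure on [0,M] and t ∈ (0,M) with 0 < F(t) < 1, where F(t) := ν([0,t]). Set s̲ := (1/F(t))·∫_{[0,t]} θ dν(θ) and s̄ := (1/(1−F(t)))·∫_{(t,M]} θ dν(θ), and for θ ∈ (s̲, s̄) define p(t,θ) := ((1−F(t))·(s̄ − θ))/(F(t)·(θ − s̲)). Let θ′, θ″ ∈ (s̲, s̄) and δ ∈ [0,1] be such that λ := δ·p(t,θ′) ∈ [0,1] and δ·p(t,θ′) + (1−δ)·p(t,θ″) = 1. Consider the two-signal mechanism with z_θ(1) = λ for θ ∈ [0,t] and z_θ(1) = δ for θ ∈ (t,M], and z_θ(2) = 1 − z_θ(1). Then: (a) signal probabilities are q₁ = λ·F(t) + δ·(1−F(t)) and q₂ = 1 − q₁; (b) if q₁ > 0, the posterior mean of signal 1 equals θ′, i.e. ∫ θ·z_θ(1) dν(θ) = θ′·q₁; (c) if q₂ > 0, the posterior mean of signal 2 equals θ″, i.e. ∫ θ·z_θ(2) dν(θ) = θ″·q₂. Consequently, if θ′ and θ″ both lie in the planner's preferred subset of [0,M], the planner's objective q₁·1{μ₁ ∈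 preferred set} + q₂·1{μ₂ ∈ preferred set} equals 1. -/

import Mathlib

open Set MeasureTheory

/-- Proposition for regime R4a: the two-signal mechanism sending signal 1
with probability `λ` on `[0,t]` and `δ` on `(t,M]` has signal probabilities
`q₁ = λ·F(t) + δ·(1−F(t))`, `q₂ = 1 − q₁`, posterior means `θ′` and `θ″`, and hence
attains planner objective `1` whenever `θ′, θ″` lie in the preferred set. -/
theorem regime_R4a_mechanism
    (M : ℝ) (hM : 0 < M) (ν : Measure ℝ) [IsProbabilityMeasure ν]
    (hsupp : ν (Icc (0:ℝ) M)ᶜ = 0)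
    (t : ℝ) (ht : t ∈ Ioo (0:ℝ) M)
    (Ft : ℝ) (hFt : Ft = (ν (Icc (0:ℝ) t)).toReal)
    (hFt_pos : 0 < Ft) (hFt_lt : Ft < 1)
    (slo shi : ℝ)
    (hslo : slo = (1 / Ft) * ∫ θ in Icc (0:ℝ) t, θ ∂ν)
    (hshi : shi = (1 / (1 - Ft)) * ∫ θ in Ioc t M, θ ∂ν)
    (p : ℝ → ℝ)
    (hp : ∀ θ, p θ = ((1 - Ft) * (shi - θ)) / (Ft * (θ - slo)))
    (θ' θ'' : ℝ) (hθ' : θ' ∈ Ioo slo shi) (hθ'' : θ'' ∈ Ioo slo shi)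
    (δ lam : ℝ) (hδ : δ ∈ Icc (0:ℝ) 1)
    (hlam : lam = δ * p θ') (hlam01 : lam ∈ Icc (0:ℝ) 1)
    (hcomb : δ * p θ' + (1 - δ) * p θ'' = 1)
    (z : ℝ → ℝ) (hz : ∀ θ, z θ = if θ ≤ t then lam else δ)
    (q1 q2 : ℝ) (hq1 : q1 = lam * Ft + δ * (1 - Ft)) (hq2 : q2 = 1 - q1) :
    (∫ θ, z θ ∂ν) = q1 ∧
    (0 < q1 → (∫ θ, θ * z θ ∂ν) = θ' * q1) ∧
    (0 < q2 → (∫ θ, θ * (1 - z θ) ∂ν) = θ'' * q2) ∧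
    (∀ S : Set ℝ, S ⊆ Icc (0:ℝ) M → θ' ∈ S → θ'' ∈ S →
      q1 * S.indicator (fun _ => (1:ℝ)) θ' + q2 * S.indicator (fun _ => (1:ℝ)) θ'' = 1) := by
  have hae : ∀ᵐ θ ∂ν, θ ∈ Icc (0:ℝ) M := by
    rw [MeasureTheory.ae_iff]
    exact hsupp
  have hFt1 : Ft ≠ 0 := ne_of_gt hFt_pos
  have hFt2 : (1 - Ft) ≠ 0 := by intro h; linarith
  have hFt2' : (0:ℝ) < 1 - Ft := by linarith
  -- a.e. set equalities
  have hIic : (Iic t : Set ℝ) =ᵐ[ν] Icc (0:ℝ) t := by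
    rw [MeasureTheory.ae_eq_set]
    refine ⟨measure_mono_null ?_ hsupp, ?_⟩
    · intro x hx
      simp only [mem_diff, mem_Iic, mem_Icc, not_and, not_le, mem_compl_iff] at *
      intro h; linarith [hx.2 h]
    · rw [Set.diff_eq_empty.mpr Icc_subset_Iic_self]; exact measure_empty
  have hIoi : (Ioi t : Set ℝ) =ᵐ[ν] Ioc t M := by
    rw [MeasureTheory.ae_eq_set]
    refine ⟨measure_mono_null ?_ hsupp, ?_⟩
    · intro x hx
      simp only [mem_diff, mem_Ioi, mem_Ioc, not_and, not_le, mem_compl_iff, mem_Icc] at *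
      intro h; linarith [hx.2 hx.1]
    · rw [Set.diff_eq_empty.mpr Ioc_subset_Ioi_self]; exact measure_empty
  have hνIic : (ν (Iic t)).toReal = Ft := by rw [measure_congr hIic, hFt]
  -- integrability
  have hid : Integrable (fun θ => θ) ν := by
    refine Integrable.mono' (integrable_const M) aestronglyMeasurable_id ?_
    filter_upwards [hae] with θ hθ
    rw [Real.norm_eq_abs, abs_le]
    exact ⟨by linarith [hθ.1], hθ.2⟩
  have hindid : Integrable ((Iic t).indicator (fun θ => θ)) ν :=
    hid.indicator measurableSet_Iic
  have hind1 : Integrable ((Iic t).indicator (fun _ => (1:ℝ))) ν :=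
    (integrable_const 1).indicator measurableSet_Iic
  -- the two conditional integrals
  have hI1 : ∫ θ in Iic t, θ ∂ν = slo * Ft := by
    rw [setIntegral_congr_set hIic]
    rw [hslo]; field_simp
  have hI2 : ∫ θ in Ioi t, θ ∂ν = shi * (1 - Ft) := by
    rw [setIntegral_congr_set hIoi]
    rw [hshi]; field_simp
  have hItot : ∫ θ, θ ∂ν = slo * Ft + shi * (1 - Ft) := by
    rw [← integral_add_compl measurableSet_Iic hid, compl_Iic, hI1, hI2]
  -- rewrite z
  have hz1 : (fun θ => z θ) = fun θ => δ + (lam - δ) * (Iic t).indicator (fun _ => (1:ℝ)) θ := by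
    funext θ; rw [hz]
    by_cases h : θ ≤ t <;> simp [h]
  have hz2 : (fun θ => θ * z θ) = fun θ => δ * θ + (lam - δ) * (Iic t).indicator (fun θ => θ) θ := by
    funext θ; rw [hz]
    by_cases h : θ ≤ t <;> simp [h] <;> ring
  have hIz : (∫ θ, z θ ∂ν) = q1 := by
    rw [hz1, integral_add (integrable_const δ) (hind1.const_mul _),
      integral_const_mul, integral_indicator measurableSet_Iic, integral_const,
      setIntegral_const, measureReal_def ν (Iic t), hνIic]
    simp [hq1]; ring
  have hIθz : (∫ θ, θ * z θ ∂ν) = lam * (slo * Ft) + δ * (shi * (1 - Ft)) := by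
    rw [hz2, integral_add (hid.const_mul δ) (hindid.const_mul _),
      integral_const_mul, integral_const_mul, integral_indicator measurableSet_Iic,
      hI1, hItot]
    ring
  -- key algebraic identities
  have hd1 : Ft * (θ' - slo) ≠ 0 := by
    have : θ' - slo > 0 := by linarith [hθ'.1]
    positivity
  have hd2 : Ft * (θ'' - slo) ≠ 0 := by
    have : θ'' - slo > 0 := by linarith [hθ''.1]
    positivity
  have hA : lam * (Ft * (θ' - slo)) = δ * ((1 - Ft) * (shi - θ')) := by
    rw [hlam, hp]; field_simp; exact mul_div_cancel_right₀ _ (right_ne_zero_of_mul hd1)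
  have hB : (1 - lam) * (Ft * (θ'' - slo)) = (1 - δ) * ((1 - Ft) * (shi - θ'')) := by
    have h1lam : 1 - lam = (1 - δ) * p θ'' := by rw [hlam]; linarith [hcomb]
    rw [h1lam, hp]; field_simp; exact mul_div_cancel_right₀ _ (right_ne_zero_of_mul hd2)
  refine ⟨hIz, ?_, ?_, ?_⟩
  · intro _
    rw [hIθz, hq1]; linear_combination -hA
  · intro _
    have : (∫ θ, θ * (1 - z θ) ∂ν) = (∫ θ, θ ∂ν) - ∫ θ, θ * z θ ∂ν := by
      rw [← integral_sub hid]
      · congr 1; funext θ; ring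
      · rw [hz2]; exact (hid.const_mul δ).add (hindid.const_mul _)
    rw [this, hItot, hIθz, hq2, hq1]; linear_combination -hB
  · intro S _ h1 h2
    rw [Set.indicator_of_mem h1, Set.indicator_of_mem h2, hq2]; ring
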